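/- arXiv:0901.4829 — 4 statements merged into one kernel-verified Lean document; each statement's English description precedes it below -/
import Mathlib

section
/- There exists u > 0 with F(u) > 0 if and only if ω < ω_{p,q}. -/
/-- The double power nonlinearity `f(u) = -ω u + u^p - u^q`. -/
noncomputable def f (ω p q u : ℝ) : ℝ := -ω * u + u ^ p - u ^ q

/-- Its primitive `F(u) = ∫₀ᵘ f = -(ω/2)u² + u^{p+1}/(p+1) - u^{q+1}/(q+1)`. -/
noncomputable def F (ω p q u : ℝ) : ℝ :=
  -(ω / 2) * u ^ 2 + u ^ (p + 1) / (p + 1) - u ^ (q + 1) / (q + 1)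

/-- The critical frequency `ω_{p,q}`. -/
noncomputable def omegaPQ (p q : ℝ) : ℝ :=
  (2 * (q - p) / ((p + 1) * (q - 1))) *
    (((p - 1) * (q + 1)) / ((p + 1) * (q - 1))) ^ ((p - 1) / (q - p))

/-- There exists `u > 0` with `F(u) > 0` if and only if `ω < ω_{p,q}`. -/
theorem exists_pos_F_iff (p q ω : ℝ) (hp : 1 < p) (hpq : p < q) (hω : 0 < ω) :
    (∃ u : ℝ, 0 < u ∧ 0 < F ω p q u) ↔ ω < omegaPQ p q := by
  have hp1 : (0:ℝ) < p - 1 := by linarith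
  have hq1 : (0:ℝ) < q - 1 := by linarith
  have hqp : (0:ℝ) < q - p := by linarith
  have hp1' : (0:ℝ) < p + 1 := by linarith
  have hq1' : (0:ℝ) < q + 1 := by linarith
  set A : ℝ := ((p - 1) * (q + 1)) / ((p + 1) * (q - 1)) with hAdef
  have hA : 0 < A := div_pos (mul_pos hp1 hq1') (mul_pos hp1' hq1)
  set B : ℝ := A ^ ((p - 1) / (q - p)) with hBdef
  have hB : 0 < B := Real.rpow_pos_of_pos hA _
  have homega : omegaPQ p q = 2 * (q - p) / ((p + 1) * (q - 1)) * B := rfl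
  -- the rewriting of F
  have hF : ∀ u : ℝ, 0 < u →
      F ω p q u = u ^ 2 * (-(ω / 2) + u ^ (p - 1) / (p + 1) - u ^ (q - 1) / (q + 1)) := by
    intro u hu
    have h1 : u ^ (p + 1) = u ^ (p - 1) * u ^ 2 := by
      rw [← Real.rpow_natCast u 2, ← Real.rpow_add hu]
      congr 1; ring
    have h2 : u ^ (q + 1) = u ^ (q - 1) * u ^ 2 := by
      rw [← Real.rpow_natCast u 2, ← Real.rpow_add hu]
      congr 1; ring
    rw [F, h1, h2]; ring
  -- the maximum inequality
  have key : ∀ u : ℝ, 0 < u →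
      u ^ (p - 1) / (p + 1) - u ^ (q - 1) / (q + 1) ≤ omegaPQ p q / 2 := by
    intro u hu
    set w₁ : ℝ := (p - 1) / (q - 1) with hw₁def
    set w₂ : ℝ := (q - p) / (q - 1) with hw₂def
    have hw : w₁ + w₂ = 1 := by rw [hw₁def, hw₂def]; field_simp; ring
    have hgm := Real.geom_mean_le_arith_mean2_weighted
      (w₁ := w₁) (w₂ := w₂) (p₁ := u ^ (q - 1) / A) (p₂ := B)
      (le_of_lt (div_pos hp1 hq1)) (le_of_lt (div_pos hqp hq1))
      (le_of_lt (div_pos (Real.rpow_pos_of_pos hu _) hA)) hB.le hw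
    have hAw : (0:ℝ) < A ^ w₁ := Real.rpow_pos_of_pos hA _
    have hlhs : (u ^ (q - 1) / A) ^ w₁ * B ^ w₂ = u ^ (p - 1) := by
      rw [Real.div_rpow (Real.rpow_pos_of_pos hu _).le hA.le,
        ← Real.rpow_mul hu.le, hBdef, ← Real.rpow_mul hA.le]
      have e1 : (q - 1) * w₁ = p - 1 := by
        rw [hw₁def]; field_simp
      have e2 : (p - 1) / (q - p) * w₂ = w₁ := by
        rw [hw₁def, hw₂def]; field_simp
      rw [e1, e2, div_mul_cancel₀ _ (ne_of_gt hAw)]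
    rw [hlhs] at hgm
    have hrhs1 : w₁ * (u ^ (q - 1) / A) = (p + 1) / (q + 1) * u ^ (q - 1) := by
      rw [hw₁def, hAdef]
      field_simp
    rw [hrhs1] at hgm
    rw [homega, sub_le_iff_le_add, div_le_iff₀ hp1']
    calc u ^ (p - 1) ≤ (p + 1) / (q + 1) * u ^ (q - 1) + w₂ * B := hgm
      _ = (2 * (q - p) / ((p + 1) * (q - 1)) * B / 2 + u ^ (q - 1) / (q + 1)) * (p + 1) := by
          rw [hw₂def]; field_simp; ring
  -- value at the maximizer
  set u₀ : ℝ := A ^ (1 / (q - p)) with hu₀def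
  have hu₀ : 0 < u₀ := Real.rpow_pos_of_pos hA _
  have hval : u₀ ^ (p - 1) / (p + 1) - u₀ ^ (q - 1) / (q + 1) = omegaPQ p q / 2 := by
    have e1 : u₀ ^ (p - 1) = B := by
      rw [hu₀def, ← Real.rpow_mul hA.le, hBdef]
      congr 1
      field_simp
    have e2 : u₀ ^ (q - 1) = A * B := by
      rw [hu₀def, ← Real.rpow_mul hA.le, hBdef]
      have : 1 / (q - p) * (q - 1) = 1 + (p - 1) / (q - p) := by field_simp; ring
      rw [this, Real.rpow_add hA, Real.rpow_one]
    rw [e1, e2, homega, hAdef]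
    field_simp
    ring
  constructor
  · rintro ⟨u, hu, hFu⟩
    rw [hF u hu] at hFu
    have hu2 : (0:ℝ) < u ^ 2 := by positivity
    have hX : 0 < -(ω / 2) + u ^ (p - 1) / (p + 1) - u ^ (q - 1) / (q + 1) := by
      nlinarith [key u hu]
    linarith [key u hu]
  · intro hlt
    refine ⟨u₀, hu₀, ?_⟩
    rw [hF u₀ hu₀]
    have hu2 : (0:ℝ) < u₀ ^ 2 := by positivity
    have : 0 < -(ω / 2) + u₀ ^ (p - 1) / (p + 1) - u₀ ^ (q - 1) / (q + 1) := by
      linarith [hval]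
    exact mul_pos hu2 this
end

section
/- If 0 < ω < ω_{p,q}, then there exist real numbers 0 < β < θ such that F(u) < 0 for u ∈ (0,β), F(β) = 0, F(u) > 0 for u ∈ (β,θ), F(θ) = 0, and F(u) < 0 for u ∈ (θ,∞). -/
/-- If `0 < ω < ω_{p,q}`, then there exist `0 < β < θ` such that `F < 0` on `(0,β)`,
`F(β) = 0`, `F > 0` on `(β,θ)`, `F(θ) = 0`, and `F < 0` on `(θ,∞)`. -/
theorem F_sign_structure (p q ω : ℝ) (hp : 1 < p) (hpq : p < q) (hω : 0 < ω)
    (hωpq : ω < omegaPQ p q) :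
    ∃ β θ : ℝ, 0 < β ∧ β < θ ∧
      (∀ u, 0 < u → u < β → F ω p q u < 0) ∧
      F ω p q β = 0 ∧
      (∀ u, β < u → u < θ → 0 < F ω p q u) ∧
      F ω p q θ = 0 ∧
      (∀ u, θ < u → F ω p q u < 0) := by
  have hp1 : (0:ℝ) < p - 1 := by linarith
  have hq1 : (0:ℝ) < q - 1 := by linarith
  have hqp : (0:ℝ) < q - p := by linarith
  have hp0 : (0:ℝ) < p + 1 := by linarith
  have hq0 : (0:ℝ) < q + 1 := by linarith
  set K : ℝ := ((p - 1) * (q + 1)) / ((p + 1) * (q - 1)) with hKdef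
  have hK : 0 < K := by positivity
  set A : ℝ := K ^ ((1:ℝ) / (q - p)) with hAdef
  have hA : 0 < A := Real.rpow_pos_of_pos hK _
  have hAqp : A ^ (q - p) = K := by
    rw [hAdef, ← Real.rpow_mul hK.le, one_div_mul_cancel hqp.ne', Real.rpow_one]
  have hAp1 : A ^ (p - 1) = K ^ ((p - 1) / (q - p)) := by
    rw [hAdef, ← Real.rpow_mul hK.le]
    congr 1
    field_simp
  set g : ℝ → ℝ := fun u => -(ω / 2) + u ^ (p - 1) / (p + 1) - u ^ (q - 1) / (q + 1)
    with hgdef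
  -- F = u² g(u) for u > 0
  have hFg : ∀ u : ℝ, 0 < u → F ω p q u = u ^ 2 * g u := by
    intro u hu
    have h1 : u ^ (p + 1) = u ^ (p - 1) * u ^ 2 := by
      rw [show p + 1 = (p - 1) + 2 by ring, Real.rpow_add hu,
        show ((2:ℝ)) = ((2:ℕ):ℝ) by norm_num, Real.rpow_natCast]
    have h2 : u ^ (q + 1) = u ^ (q - 1) * u ^ 2 := by
      rw [show q + 1 = (q - 1) + 2 by ring, Real.rpow_add hu,
        show ((2:ℝ)) = ((2:ℕ):ℝ) by norm_num, Real.rpow_natCast]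
    simp only [F, hgdef, h1, h2]
    ring
  -- derivative of g
  set g' : ℝ → ℝ := fun u =>
      (p - 1) * u ^ (p - 1 - 1) / (p + 1) - (q - 1) * u ^ (q - 1 - 1) / (q + 1)
    with hg'def
  have hderiv : ∀ u : ℝ, 0 < u → HasDerivAt g (g' u) u := by
    intro u hu
    have h1 : HasDerivAt (fun x : ℝ => x ^ (p - 1)) ((p - 1) * u ^ (p - 1 - 1)) u :=
      Real.hasDerivAt_rpow_const (Or.inl hu.ne')
    have h2 : HasDerivAt (fun x : ℝ => x ^ (q - 1)) ((q - 1) * u ^ (q - 1 - 1)) u :=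
      Real.hasDerivAt_rpow_const (Or.inl hu.ne')
    have := ((hasDerivAt_const u (-(ω / 2))).add (h1.div_const (p + 1))).sub
      (h2.div_const (q + 1))
    rw [zero_add] at this
    exact this
  -- factor the derivative
  have hg'eq : ∀ u : ℝ, 0 < u →
      g' u = u ^ (p - 1 - 1) * ((p - 1) / (p + 1) - (q - 1) / (q + 1) * u ^ (q - p)) := by
    intro u hu
    have h1 : u ^ (q - 1 - 1) = u ^ (p - 1 - 1) * u ^ (q - p) := by
      rw [← Real.rpow_add hu]; ring_nf
    rw [hg'def]
    simp only [h1]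
    ring
  -- sign of derivative
  have hKAcomp : (p - 1) / (p + 1) = (q - 1) / (q + 1) * K := by
    rw [hKdef]; field_simp
  have hg'pos : ∀ u : ℝ, 0 < u → u < A → 0 < g' u := by
    intro u hu huA
    rw [hg'eq u hu]
    apply mul_pos (Real.rpow_pos_of_pos hu _)
    have h : u ^ (q - p) < K := by
      rw [← hAqp]; exact Real.rpow_lt_rpow hu.le huA hqp
    rw [hKAcomp]
    have : (0:ℝ) < (q - 1) / (q + 1) := by positivity
    nlinarith
  have hg'neg : ∀ u : ℝ, A < u → g' u < 0 := by
    intro u huA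
    have hu : 0 < u := hA.trans huA
    rw [hg'eq u hu]
    have h : K < u ^ (q - p) := by
      rw [← hAqp]; exact Real.rpow_lt_rpow hA.le huA hqp
    have hpow : 0 < u ^ (p - 1 - 1) := Real.rpow_pos_of_pos hu _
    have hd : (0:ℝ) < (q - 1) / (q + 1) := by positivity
    rw [hKAcomp]
    apply mul_neg_of_pos_of_neg hpow
    nlinarith
  -- continuity
  have hgc : ∀ s : Set ℝ, s ⊆ Set.Ioi 0 → ContinuousOn g s := by
    intro s hs x hx
    exact (hderiv x (hs hx)).continuousAt.continuousWithinAt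
  -- strict mono / anti
  have hmono : StrictMonoOn g (Set.Ioc 0 A) := by
    apply strictMonoOn_of_deriv_pos (convex_Ioc 0 A)
    · exact hgc _ (fun x hx => hx.1)
    · intro x hx
      rw [interior_Ioc] at hx
      rw [(hderiv x hx.1).deriv]
      exact hg'pos x hx.1 hx.2
  have hanti : StrictAntiOn g (Set.Ici A) := by
    apply strictAntiOn_of_deriv_neg (convex_Ici A)
    · exact hgc _ (fun x hx => lt_of_lt_of_le hA hx)
    · intro x hx
      rw [interior_Ici] at hx
      rw [(hderiv x (hA.trans hx)).deriv]
      exact hg'neg x hx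
  -- g(A) > 0
  have hgA : 0 < g A := by
    have hAq1 : A ^ (q - 1) = A ^ (p - 1) * K := by
      rw [← hAqp, ← Real.rpow_add hA]; ring_nf
    have homega : omegaPQ p q = 2 * ((q - p) / ((p + 1) * (q - 1))) * A ^ (p - 1) := by
      rw [omegaPQ, hAp1]; ring
    have hgAeq : g A = -(ω / 2) + A ^ (p - 1) * ((q - p) / ((p + 1) * (q - 1))) := by
      rw [hgdef]
      simp only [hAq1, hKdef]
      field_simp
      ring
    rw [hgAeq]
    rw [homega] at hωpq
    linarith
  -- small point with g < 0
  have hsmall : ∃ ε : ℝ, 0 < ε ∧ ε < A ∧ g ε < 0 := by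
    set δ : ℝ := (ω * (p + 1) / 2) ^ ((1:ℝ) / (p - 1)) with hδdef
    have hδ : 0 < δ := Real.rpow_pos_of_pos (by positivity) _
    refine ⟨min (A / 2) (δ / 2), by positivity, ?_, ?_⟩
    · calc min (A / 2) (δ / 2) ≤ A / 2 := min_le_left _ _
        _ < A := by linarith
    · set ε := min (A / 2) (δ / 2) with hεdef
      have hε : 0 < ε := by positivity
      have hεδ : ε < δ := lt_of_le_of_lt (min_le_right _ _) (by linarith)
      have h1 : ε ^ (p - 1) < δ ^ (p - 1) := Real.rpow_lt_rpow hε.le hεδ hp1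
      have h2 : δ ^ (p - 1) = ω * (p + 1) / 2 := by
        rw [hδdef, ← Real.rpow_mul (by positivity), one_div_mul_cancel hp1.ne',
          Real.rpow_one]
      have h3 : 0 < ε ^ (q - 1) := Real.rpow_pos_of_pos hε _
      have : ε ^ (p - 1) / (p + 1) < ω / 2 := by
        rw [div_lt_iff₀ hp0]
        rw [h2] at h1
        linarith
      simp only [hgdef]
      have := div_pos h3 hq0
      linarith
  -- large point with g < 0
  have hlarge : ∃ M : ℝ, A < M ∧ g M < 0 := by
    set L : ℝ := ((q + 1) / (p + 1)) ^ ((1:ℝ) / (q - p)) with hLdef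
    have hL : 0 < L := Real.rpow_pos_of_pos (by positivity) _
    refine ⟨max (2 * A) (L + 1), lt_of_lt_of_le (by linarith) (le_max_left _ _), ?_⟩
    set M := max (2 * A) (L + 1) with hMdef
    have hM : 0 < M := lt_of_lt_of_le (by linarith) (le_max_left _ _)
    have hML : L < M := lt_of_lt_of_le (by linarith) (le_max_right _ _)
    have h1 : L ^ (q - p) < M ^ (q - p) := Real.rpow_lt_rpow hL.le hML hqp
    have h2 : L ^ (q - p) = (q + 1) / (p + 1) := by
      rw [hLdef, ← Real.rpow_mul (by positivity), one_div_mul_cancel hqp.ne',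
        Real.rpow_one]
    have h3 : M ^ (q - 1) = M ^ (p - 1) * M ^ (q - p) := by
      rw [← Real.rpow_add hM]; ring_nf
    have hMp : 0 < M ^ (p - 1) := Real.rpow_pos_of_pos hM _
    have hkey : M ^ (p - 1) / (p + 1) - M ^ (q - 1) / (q + 1) < 0 := by
      rw [h3]
      rw [h2] at h1
      rw [sub_neg, div_lt_div_iff₀ hp0 hq0]
      calc M ^ (p - 1) * (q + 1) = M ^ (p - 1) * ((q + 1) / (p + 1)) * (p + 1) := by
            field_simp
        _ < M ^ (p - 1) * M ^ (q - p) * (p + 1) := by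
            apply mul_lt_mul_of_pos_right _ hp0
            exact mul_lt_mul_of_pos_left h1 hMp
    simp only [hgdef]
    linarith
  obtain ⟨ε, hε, hεA, hgε⟩ := hsmall
  obtain ⟨M, hAM, hgM⟩ := hlarge
  -- β via IVT on [ε, A]
  have hβex : ∃ β ∈ Set.Ioo ε A, g β = 0 := by
    have := intermediate_value_Ioo hεA.le (hgc _ (fun x hx => lt_of_lt_of_le hε hx.1))
    have h0 : (0:ℝ) ∈ Set.Ioo (g ε) (g A) := ⟨hgε, hgA⟩
    obtain ⟨β, hβ, hβ0⟩ := this h0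
    exact ⟨β, hβ, hβ0⟩
  have hθex : ∃ θ ∈ Set.Ioo A M, g θ = 0 := by
    have := intermediate_value_Ioo' hAM.le (hgc _ (fun x hx => lt_of_lt_of_le hA hx.1))
    have h0 : (0:ℝ) ∈ Set.Ioo (g M) (g A) := ⟨hgM, hgA⟩
    obtain ⟨θ, hθ, hθ0⟩ := this h0
    exact ⟨θ, hθ, hθ0⟩
  obtain ⟨β, ⟨hεβ, hβA⟩, hgβ⟩ := hβex
  obtain ⟨θ, ⟨hAθ, hθM⟩, hgθ⟩ := hθex
  have hβ : 0 < β := hε.trans hεβ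
  have hβmem : β ∈ Set.Ioc 0 A := ⟨hβ, hβA.le⟩
  refine ⟨β, θ, hβ, hβA.trans hAθ, ?_, ?_, ?_, ?_, ?_⟩
  · intro u hu huβ
    rw [hFg u hu]
    apply mul_neg_of_pos_of_neg (by positivity)
    have := hmono ⟨hu, (huβ.trans hβA).le⟩ hβmem huβ
    linarith [hgβ]
  · rw [hFg β hβ, hgβ, mul_zero]
  · intro u hβu huθ
    have hu : 0 < u := hβ.trans hβu
    rw [hFg u hu]
    apply mul_pos (by positivity)
    rcases le_or_gt u A with h | h
    · have := hmono hβmem ⟨hu, h⟩ hβu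
      linarith [hgβ]
    · have := hanti h.le ((h.trans huθ).le) huθ
      linarith [hgθ]
  · rw [hFg θ (hA.trans hAθ), hgθ, mul_zero]
  · intro u hθu
    have hu : 0 < u := (hA.trans hAθ).trans hθu
    rw [hFg u hu]
    apply mul_neg_of_pos_of_neg (by positivity)
    have := hanti hAθ.le (hAθ.trans hθu).le hθu
    linarith [hgθ]
end

section
/- Assume 0 < ω < ω_{p,q}. Let 0 < b < c be the positive zeros of f (so f < 0 on (0,b), f > 0 on (b,c), f < 0 on (c,∞)) and let 0 < β < θ be the positive zeros of F (so F < 0 на (0,β), F > 0 on (β,θ), F < 0 on (θ,∞)). Then b < β < c < θ. -/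
lemma F_hasDerivAt (ω p q : ℝ) (hp : 1 < p) (hpq : p < q) {x : ℝ} (hx : 0 < x) :
    HasDerivAt (F ω p q) (f ω p q x) x := by
  have hp1 : p + 1 ≠ 0 := by linarith
  have hq1 : q + 1 ≠ 0 := by linarith
  have h1 : HasDerivAt (fun u : ℝ => u ^ (p + 1)) ((p + 1) * x ^ (p + 1 - 1)) x :=
    Real.hasDerivAt_rpow_const (Or.inl hx.ne')
  have h2 : HasDerivAt (fun u : ℝ => u ^ (q + 1)) ((q + 1) * x ^ (q + 1 - 1)) x :=
    Real.hasDerivAt_rpow_const (Or.inl hx.ne')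
  have h0 : HasDerivAt (fun u : ℝ => -(ω / 2) * u ^ 2) (-(ω / 2) * (2 * x)) x := by
    simpa using (hasDerivAt_pow 2 x).const_mul (-(ω / 2))
  have h := (h0.add (h1.div_const (p + 1))).sub (h2.div_const (q + 1))
  have hep : p + 1 - 1 = p := by ring
  have heq : q + 1 - 1 = q := by ring
  rw [hep, heq] at h
  have hval : -(ω / 2) * (2 * x) + (p + 1) * x ^ p / (p + 1) - (q + 1) * x ^ q / (q + 1)
      = f ω p q x := by
    field_simp [f]; unfold f; ring
  rw [hval] at h
  exact h

lemma F_contOn (ω p q : ℝ) (hp : 1 < p) (hpq : p < q) :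
    ContinuousOn (F ω p q) (Set.Ici 0) := by
  intro x _
  apply ContinuousAt.continuousWithinAt
  have h1 : ContinuousAt (fun u : ℝ => u ^ (p + 1)) x :=
    Real.continuousAt_rpow_const x (p + 1) (Or.inr (by linarith))
  have h2 : ContinuousAt (fun u : ℝ => u ^ (q + 1)) x :=
    Real.continuousAt_rpow_const x (q + 1) (Or.inr (by linarith))
  have h0 : ContinuousAt (fun u : ℝ => -(ω / 2) * u ^ 2) x :=
    ((continuous_pow 2).continuousAt).const_mul _
  exact (h0.add (h1.div_const _)).sub (h2.div_const _)

lemma F_zero (ω p q : ℝ) (hp : 1 < p) (hpq : p < q) : F ω p q 0 = 0 := by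
  have hp1 : p + 1 ≠ 0 := by linarith
  have hq1 : q + 1 ≠ 0 := by linarith
  simp [F, Real.zero_rpow hp1, Real.zero_rpow hq1]

/-- strict anti on [a,d] ⊆ [0,∞) when f < 0 on (a,d) -/
lemma F_strictAntiOn (ω p q : ℝ) (hp : 1 < p) (hpq : p < q) {a d : ℝ} (ha : 0 ≤ a)
    (hneg : ∀ u, a < u → u < d → f ω p q u < 0) :
    StrictAntiOn (F ω p q) (Set.Icc a d) := by
  apply strictAntiOn_of_deriv_neg (convex_Icc a d)
  · exact (F_contOn ω p q hp hpq).mono (fun x hx => le_trans ha hx.1)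
  · intro x hx
    rw [interior_Icc] at hx
    have hx0 : 0 < x := lt_of_le_of_lt ha hx.1
    rw [(F_hasDerivAt ω p q hp hpq hx0).deriv]
    exact hneg x hx.1 hx.2

lemma F_strictMonoOn (ω p q : ℝ) (hp : 1 < p) (hpq : p < q) {a d : ℝ} (ha : 0 ≤ a)
    (hpos : ∀ u, a < u → u < d → 0 < f ω p q u) :
    StrictMonoOn (F ω p q) (Set.Icc a d) := by
  apply strictMonoOn_of_deriv_pos (convex_Icc a d)
  · exact (F_contOn ω p q hp hpq).mono (fun x hx => le_trans ha hx.1)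
  · intro x hx
    rw [interior_Icc] at hx
    have hx0 : 0 < x := lt_of_le_of_lt ha hx.1
    rw [(F_hasDerivAt ω p q hp hpq hx0).deriv]
    exact hpos x hx.1 hx.2

/-- If `0 < b < c` are the positive zeros of `f` and `0 < β < θ` are the positive zeros
of `F`, then `b < β < c < θ`. -/
theorem zeros_interlace (p q ω : ℝ) (hp : 1 < p) (hpq : p < q) (hω : 0 < ω)
    (hωpq : ω < omegaPQ p q)
    (b c β θ : ℝ) (hb : 0 < b) (hbc : b < c) (hβ : 0 < β) (hβθ : β < θ)
    (hf1 : ∀ u, 0 < u → u < b → f ω p q u < 0)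
    (hfb : f ω p q b = 0)
    (hf2 : ∀ u, b < u → u < c → 0 < f ω p q u)
    (hfc : f ω p q c = 0)
    (hf3 : ∀ u, c < u → f ω p q u < 0)
    (hF1 : ∀ u, 0 < u → u < β → F ω p q u < 0)
    (hFβ : F ω p q β = 0)
    (hF2 : ∀ u, β < u → u < θ → 0 < F ω p q u)
    (hFθ : F ω p q θ = 0)
    (hF3 : ∀ u, θ < u → F ω p q u < 0) :
    b < β ∧ β < c ∧ c < θ := by
  -- b < β
  have hbβ : b < β := by
    by_contra h
    push_neg at h  -- β ≤ b
    have hanti : StrictAntiOn (F ω p q) (Set.Icc 0 β) :=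
      F_strictAntiOn ω p q hp hpq le_rfl (fun u hu1 hu2 => hf1 u hu1 (lt_of_lt_of_le hu2 h))
    have : F ω p q β < F ω p q 0 :=
      hanti ⟨le_rfl, hβ.le⟩ ⟨hβ.le, le_rfl⟩ hβ
    rw [F_zero ω p q hp hpq, hFβ] at this
    exact lt_irrefl 0 this
  -- β < c
  have hβc : β < c := by
    by_contra h
    push_neg at h  -- c ≤ β
    have hcθ : c < θ := lt_of_le_of_lt h hβθ
    have hanti : StrictAntiOn (F ω p q) (Set.Icc c θ) :=
      F_strictAntiOn ω p q hp hpq (le_of_lt (hb.trans hbc))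
        (fun u hu1 _ => hf3 u hu1)
    have h1 : F ω p q θ < F ω p q c :=
      hanti ⟨le_rfl, hcθ.le⟩ ⟨hcθ.le, le_rfl⟩ hcθ
    have h2 : F ω p q c ≤ 0 := by
      rcases lt_or_eq_of_le h with hlt | heq
      · exact le_of_lt (hF1 c (hb.trans hbc) hlt)
      · rw [← heq] at hFβ; exact le_of_eq hFβ
    rw [hFθ] at h1
    linarith
  -- c < θ
  have hcθ : c < θ := by
    by_contra h
    push_neg at h  -- θ ≤ c
    rcases lt_or_eq_of_le h with hlt | heq
    · -- θ < c : pick u in (θ, c)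
      set u := (θ + c) / 2 with hu
      have hθu : θ < u := by simp [hu]; linarith
      have huc : u < c := by simp [hu]; linarith
      have hmono : StrictMonoOn (F ω p q) (Set.Icc θ u) :=
        F_strictMonoOn ω p q hp hpq (le_of_lt (hβ.trans hβθ))
          (fun v hv1 hv2 => hf2 v (lt_trans (hbβ.trans hβθ) hv1) (lt_trans hv2 huc))
      have : F ω p q θ < F ω p q u :=
        hmono ⟨le_rfl, hθu.le⟩ ⟨hθu.le, le_rfl⟩ hθu
      rw [hFθ] at this
      exact absurd (hF3 u hθu) (not_lt.mpr this.le)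
    · -- θ = c
      have hmono : StrictMonoOn (F ω p q) (Set.Icc β c) :=
        F_strictMonoOn ω p q hp hpq hβ.le
          (fun v hv1 hv2 => hf2 v (hbβ.trans hv1) hv2)
      have : F ω p q β < F ω p q c :=
        hmono ⟨le_rfl, hβc.le⟩ ⟨hβc.le, le_rfl⟩ hβc
      rw [hFβ, ← heq, hFθ] at this
      exact lt_irrefl 0 this
  exact ⟨hbβ, hβc, hcθ⟩
end

section
/- Let n ≥ 1 be a natural number with n ≠ 2, and let 1 < p < q < p*(n). Then 2 < ((2n-(n-2)(p+1))/2) · ((2n-(n-2)(p+1))/(2n-(n-2)(q+1)))^{(p-1)/(q-p)}. -/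
open Real

private lemma log_lower (x : ℝ) (hx : 0 < x) (hx1 : x ≠ 1) : 1 - x⁻¹ < Real.log x := by
  have h := Real.log_lt_sub_one_of_pos (inv_pos.mpr hx) (fun h => hx1 (by rwa [inv_eq_one] at h))
  rw [Real.log_inv] at h
  linarith

private lemma P_pos (s : ℝ) (hs : s < 1) (hs0 : s ≠ 0) :
    0 < s / (1 - s) + Real.log (1 - s) := by
  have h1s : (0:ℝ) < 1 - s := by linarith
  have h := log_lower (1 - s) h1s (by intro h; apply hs0; linarith)
  have e : s / (1 - s) = (1 - s)⁻¹ - 1 := by field_simp; ring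
  linarith

private lemma g_deriv (s : ℝ) (hs : s < 1) (hs0 : s ≠ 0) :
    HasDerivAt (fun t => Real.log (1 - t) / t)
      (-(s / (1 - s) + Real.log (1 - s)) / s ^ 2) s := by
  have h1s : (0:ℝ) < 1 - s := by linarith
  have h1 : HasDerivAt (fun t : ℝ => 1 - t) (-1) s := by
    simpa using (hasDerivAt_id s).const_sub 1
  have h2 : HasDerivAt (fun t => Real.log (1 - t)) ((1 - s)⁻¹ * (-1)) s :=
    (Real.hasDerivAt_log h1s.ne').comp s h1
  have h3 : HasDerivAt (fun t : ℝ => t⁻¹) (-(s ^ 2)⁻¹) s := hasDerivAt_inv hs0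
  have h4 := h2.mul h3
  have heq : ((1 - s)⁻¹ * (-1)) * s⁻¹ + Real.log (1 - s) * (-(s ^ 2)⁻¹)
      = -(s / (1 - s) + Real.log (1 - s)) / s ^ 2 := by
    field_simp
    ring
  rw [heq] at h4
  have h5 : ((fun t => Real.log (1 - t)) * fun t : ℝ => t⁻¹) = fun t => Real.log (1 - t) / t := by
    funext t; simp only [Pi.mul_apply, div_eq_mul_inv]
  rw [h5] at h4
  exact h4

private lemma g_anti (S : Set ℝ) (hS : Convex ℝ S) (hSsub : S ⊆ {t | t < 1 ∧ t ≠ 0})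
    (hSo : IsOpen S) : StrictAntiOn (fun t => Real.log (1 - t) / t) S := by
  apply strictAntiOn_of_deriv_neg hS
  · intro s hs
    exact (g_deriv s (hSsub hs).1 (hSsub hs).2).continuousAt.continuousWithinAt
  · rw [hSo.interior_eq]
    intro s hs
    rw [(g_deriv s (hSsub hs).1 (hSsub hs).2).deriv]
    apply div_neg_of_neg_of_pos
    · linarith [P_pos s (hSsub hs).1 (hSsub hs).2]
    · exact (sq_nonneg s).lt_of_ne' (by simp [pow_eq_zero_iff, (hSsub hs).2])

private lemma core_pos (u v : ℝ) (hu : 0 < u) (huv : u < v) (hv : v < 1) :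
    u * Real.log (1 - v) < v * Real.log (1 - u) := by
  have h := g_anti (Set.Ioo 0 1) (convex_Ioo 0 1)
    (fun t ht => ⟨ht.2, ne_of_gt ht.1⟩) isOpen_Ioo
    ⟨hu, huv.trans hv⟩ ⟨hu.trans huv, hv⟩ huv
  beta_reduce at h
  rw [div_lt_div_iff₀ (hu.trans huv) hu] at h
  linarith

private lemma core_neg (u v : ℝ) (hvu : v < u) (hu : u < 0) :
    v * Real.log (1 - u) < u * Real.log (1 - v) := by
  have hv : v < 0 := hvu.trans hu
  have h := g_anti (Set.Iio 0) (convex_Iio 0)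
    (fun t ht => ⟨lt_trans ht one_pos, ne_of_lt ht⟩) isOpen_Iio hv hu hvu
  have huv : 0 < u * v := mul_pos_of_neg_of_neg hu hv
  have h2 := mul_lt_mul_of_pos_right h huv
  have hu0 : u ≠ 0 := ne_of_lt hu
  have hv0 : v ≠ 0 := ne_of_lt hv
  have e1 : Real.log (1 - u) / u * (u * v) = v * Real.log (1 - u) := by
    field_simp
  have e2 : Real.log (1 - v) / v * (u * v) = u * Real.log (1 - v) := by
    field_simp
  rw [e1, e2] at h2
  exact h2

private lemma finish_ineq (A B x y : ℝ) (hA : 0 < A) (hB : 0 < B)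
    (h : Real.log 4 - Real.log A < x / (y - x) * (Real.log A - Real.log B)) :
    2 < A / 2 * (A / B) ^ (x / (y - x)) := by
  have hAB : 0 < A / B := div_pos hA hB
  have h4A : (0:ℝ) < 4 / A := by positivity
  have hlog : Real.log (4 / A) < x / (y - x) * Real.log (A / B) := by
    rw [Real.log_div (by norm_num) hA.ne', Real.log_div hA.ne' hB.ne']
    exact h
  have hexp : 4 / A < (A / B) ^ (x / (y - x)) := by
    rw [Real.rpow_def_of_pos hAB]
    calc 4 / A = Real.exp (Real.log (4 / A)) := (Real.exp_log h4A).symm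
      _ < Real.exp (Real.log (A / B) * (x / (y - x))) := by
          rw [mul_comm]; exact Real.exp_lt_exp.mpr hlog
  have h4 : 4 < A * ((A / B) ^ (x / (y - x))) := by
    have := (div_lt_iff₀ hA).mp (by rwa [div_lt_iff₀ hA] at hexp)
    nlinarith [hexp, hA]
  linarith

private lemma main_pos (x y : ℝ) (hx : 0 < x) (hxy : x < y) (hy : y < 4) :
    2 < (4 - x) / 2 * ((4 - x) / (4 - y)) ^ (x / (y - x)) := by
  have hA : 0 < 4 - x := by linarith
  have hB : 0 < 4 - y := by linarith
  apply finish_ineq _ _ _ _ hA hB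
  have key := core_pos (x / 4) (y / 4) (by linarith) (by linarith) (by linarith)
  have e1 : (1:ℝ) - x / 4 = (4 - x) / 4 := by ring
  have e2 : (1:ℝ) - y / 4 = (4 - y) / 4 := by ring
  rw [e1, e2, Real.log_div hA.ne' (by norm_num), Real.log_div hB.ne' (by norm_num)] at key
  -- key : x/4 * (log (4-y) - log 4) < y/4 * (log (4-x) - log 4)
  rw [div_mul_eq_mul_div, lt_div_iff₀ (by linarith : (0:ℝ) < y - x)]
  nlinarith [key]

private lemma main_neg (x y : ℝ) (hyx : y < x) (hx : x < 0) :
    2 < (4 - x) / 2 * ((4 - x) / (4 - y)) ^ (x / (y - x)) := by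
  have hy : y < 0 := hyx.trans hx
  have hA : 0 < 4 - x := by linarith
  have hB : 0 < 4 - y := by linarith
  apply finish_ineq _ _ _ _ hA hB
  have key := core_neg (x / 4) (y / 4) (by linarith) (by linarith)
  have e1 : (1:ℝ) - x / 4 = (4 - x) / 4 := by ring
  have e2 : (1:ℝ) - y / 4 = (4 - y) / 4 := by ring
  rw [e1, e2, Real.log_div hA.ne' (by norm_num), Real.log_div hB.ne' (by norm_num)] at key
  -- key : y/4 * (log (4-x) - log 4) < x/4 * (log (4-y) - log 4)
  rw [show x / (y - x) = (-x) / (x - y) by rw [neg_div, ← div_neg]; ring_nf]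
  rw [div_mul_eq_mul_div, lt_div_iff₀ (by linarith : (0:ℝ) < x - y)]
  nlinarith [key]

/-- For `n ≥ 1`, `n ≠ 2`, and `1 < p < q < p*(n)` (the subcriticality condition is
vacuous for `n = 1` where `p*(n) = ∞`), we have
`2 < ((2n-(n-2)(p+1))/2) · ((2n-(n-2)(p+1))/(2n-(n-2)(q+1)))^{(p-1)/(q-p)}`. -/
theorem key_inequality (p q : ℝ) (n : ℕ) (hn : 1 ≤ n) (hn2 : n ≠ 2)
    (hp : 1 < p) (hpq : p < q)
    (hq : 3 ≤ n → q < ((n : ℝ) + 2) / ((n : ℝ) - 2)) :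
    2 < ((2 * (n : ℝ) - ((n : ℝ) - 2) * (p + 1)) / 2) *
      ((2 * (n : ℝ) - ((n : ℝ) - 2) * (p + 1)) /
        (2 * (n : ℝ) - ((n : ℝ) - 2) * (q + 1))) ^ ((p - 1) / (q - p)) := by
  obtain hn1 | hn3 : n = 1 ∨ 3 ≤ n := by omega
  · subst hn1
    set x := 1 - p with hxdef
    set y := 1 - q with hydef
    have e1 : 2 * ((1:ℕ) : ℝ) - (((1:ℕ) : ℝ) - 2) * (p + 1) = 4 - x := by push_cast; ring
    have e2 : 2 * ((1:ℕ) : ℝ) - (((1:ℕ) : ℝ) - 2) * (q + 1) = 4 - y := by push_cast; ring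
    have e3 : (p - 1) / (q - p) = x / (y - x) := by
      rw [show y - x = -(q - p) by rw [hxdef, hydef]; ring,
        show x = -(p - 1) by rw [hxdef]; ring, neg_div_neg_eq]
    rw [e1, e2, e3]
    exact main_neg x y (by rw [hxdef, hydef]; linarith) (by rw [hxdef]; linarith)
  · have hc : (3:ℝ) ≤ (n:ℝ) := by exact_mod_cast hn3
    set c := (n:ℝ) - 2 with hcdef
    have hc0 : 0 < c := by rw [hcdef]; linarith
    set x := c * (p - 1) with hxdef
    set y := c * (q - 1) with hydef
    have hx : 0 < x := mul_pos hc0 (by linarith)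
    have hxy : x < y := by
      rw [hxdef, hydef]; exact mul_lt_mul_of_pos_left (by linarith) hc0
    have hy : y < 4 := by
      have hq' := hq hn3
      rw [lt_div_iff₀ hc0] at hq'
      rw [hydef]; nlinarith [hq']
    have e1 : 2 * (n : ℝ) - ((n : ℝ) - 2) * (p + 1) = 4 - x := by
      rw [hxdef, hcdef]; ring
    have e2 : 2 * (n : ℝ) - ((n : ℝ) - 2) * (q + 1) = 4 - y := by
      rw [hydef, hcdef]; ring
    have e3 : (p - 1) / (q - p) = x / (y - x) := by
      rw [show y - x = c * (q - p) by rw [hxdef, hydef]; ring, hxdef,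
        mul_div_mul_left _ _ hc0.ne']
    rw [e1, e2, e3]
    exact main_pos x y hx hxy hy
end
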